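/- Let 𝔤 be a finite-dimensional real Lie algebra that is not unimodular (i.e. there exists X ∈ 𝔤 with tr(ad_𝔤(X)) ≠ 0), and let 𝔤′ be a subalgebra that is reductive in 𝔤 (meaning 𝔤 is a semisimple 𝔤′-module under the adjoint action) and whose adjoint action on 𝔤 is trace-free. Then the centralizer 𝔷_𝔤(𝔤′) of 𝔤′ in 𝔤 acts on 𝔤 non-trace-freely: there exists Z ∈ 𝔷_𝔤(𝔤′) with tr(ad_𝔤(Z)) ≠ 0. -/

import Mathlib

open Module LieAlgebra

attribute [local instance] LieRing.ofAssociativeRing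

lemma trace_ad_lie (𝔤 : Type) [LieRing 𝔤] [LieAlgebra ℝ 𝔤] [FiniteDimensional ℝ 𝔤]
    (X Y : 𝔤) : LinearMap.trace ℝ 𝔤 (LieAlgebra.ad ℝ 𝔤 ⁅X, Y⁆) = 0 := by
  rw [LieHom.map_lie, Ring.lie_def, map_sub, LinearMap.trace_mul_comm, sub_self]

/-- If `𝔤` is a non-unimodular finite-dimensional real Lie algebra and `𝔤′` is a
subalgebra that is reductive in `𝔤` (every `𝔤′`-invariant subspace of `𝔤` has a
`𝔤′`-invariant complement) whose adjoint action on `𝔤` is trace-free, then the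
centralizer `𝔷_𝔤(𝔤′)` acts non-trace-freely on `𝔤`. -/
theorem stmt5 (𝔤 : Type) [LieRing 𝔤] [LieAlgebra ℝ 𝔤] [FiniteDimensional ℝ 𝔤]
    (𝔤' : LieSubalgebra ℝ 𝔤)
    (hnonuni : ∃ X : 𝔤, LinearMap.trace ℝ 𝔤 (LieAlgebra.ad ℝ 𝔤 X) ≠ 0)
    (hred : ∀ W : Submodule ℝ 𝔤, (∀ X ∈ 𝔤', ∀ w ∈ W, ⁅X, w⁆ ∈ W) →
      ∃ W' : Submodule ℝ 𝔤, (∀ X ∈ 𝔤', ∀ w ∈ W', ⁅X, w⁆ ∈ W') ∧ IsCompl W W')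
    (htf : ∀ X ∈ 𝔤', LinearMap.trace ℝ 𝔤 (LieAlgebra.ad ℝ 𝔤 X) = 0) :
    ∃ Z : 𝔤, (∀ X ∈ 𝔤', ⁅Z, X⁆ = 0) ∧
      LinearMap.trace ℝ 𝔤 (LieAlgebra.ad ℝ 𝔤 Z) ≠ 0 := by
  set φ : 𝔤 →ₗ[ℝ] ℝ := (LinearMap.trace ℝ 𝔤).comp (LieAlgebra.ad ℝ 𝔤).toLinearMap with hφ
  have hφ_apply : ∀ X : 𝔤, φ X = LinearMap.trace ℝ 𝔤 (LieAlgebra.ad ℝ 𝔤 X) := fun X => rfl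
  set K : Submodule ℝ 𝔤 := LinearMap.ker φ with hK
  have hKinv : ∀ X ∈ 𝔤', ∀ w ∈ K, ⁅X, w⁆ ∈ K := by
    intro X _ w _
    simp only [hK, LinearMap.mem_ker, hφ_apply]
    exact trace_ad_lie 𝔤 X w
  obtain ⟨W', hW'inv, hcompl⟩ := hred K hKinv
  -- K ≠ ⊤
  obtain ⟨X0, hX0⟩ := hnonuni
  have hKne : K ≠ ⊤ := by
    intro h
    exact hX0 (by simpa [hK, LinearMap.mem_ker, hφ_apply] using (h ▸ Submodule.mem_top : X0 ∈ K))
  have hW'ne : W' ≠ ⊥ := by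
    intro h
    apply hKne
    have := hcompl.sup_eq_top
    rw [h, sup_bot_eq] at this
    exact this
  obtain ⟨Z, hZW', hZne⟩ := Submodule.exists_mem_ne_zero_of_ne_bot hW'ne
  have hZK : Z ∉ K := by
    intro h
    exact hZne (by simpa using hcompl.disjoint.le_bot ⟨h, hZW'⟩)
  refine ⟨Z, ?_, by simpa [hK, hφ_apply, LinearMap.mem_ker] using hZK⟩
  intro X hX
  have h1 : ⁅X, Z⁆ ∈ W' := hW'inv X hX Z hZW'
  have h2 : ⁅X, Z⁆ ∈ K := by
    simp only [hK, LinearMap.mem_ker, hφ_apply]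
    exact trace_ad_lie 𝔤 X Z
  have : ⁅X, Z⁆ = 0 := by simpa using hcompl.disjoint.le_bot ⟨h2, h1⟩
  rw [← lie_skew, this, neg_zero]
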